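/- Improvement over the Euclidean entropy–energy constant (part of Theorem 4.1, Φ* < Φ_{ℝ²}): For every real k > 1, with x₀ = k(k−1)/(2k+1), one has C_{x₀} > C_k, i.e. ln(k(k−1)/(2k+1)) − ln(π) − 2 > 2k·ln((k−1)/k) + ln((k−1)/(2π)). -/

import Mathlib

lemma log_sub_log_gt (a b : ℝ) (hb : 0 < b) (hab : b < a) :
    1 - b / a < Real.log a - Real.log b := by
  have ha : 0 < a := hb.trans hab
  have hne : b / a ≠ 1 := by
    intro h
    rw [div_eq_one_iff_eq ha.ne'] at h
    linarith
  have h1 : Real.log (b / a) < b / a - 1 :=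
    Real.log_lt_sub_one_of_pos (by positivity) hne
  rw [Real.log_div hb.ne' ha.ne'] at h1
  linarith

/-- Improvement over the Euclidean entropy–energy constant (part of Theorem 4.1,
`Φ* < Φ_{ℝ²}`): for every real `k > 1`, with `x₀ = k(k−1)/(2k+1)`, one has
`C_{x₀} > C_k`, i.e.
`ln(k(k−1)/(2k+1)) − ln(π) − 2 > 2k·ln((k−1)/k) + ln((k−1)/(2π))`. -/
theorem improvement_over_euclidean_constant (k : ℝ) (hk : 1 < k) :
    2 * k * Real.log ((k - 1) / k) + Real.log ((k - 1) / (2 * Real.pi))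
      < Real.log (k * (k - 1) / (2 * k + 1)) - Real.log Real.pi - 2 := by
  have hk0 : (0:ℝ) < k := by linarith
  have hk1 : (0:ℝ) < k - 1 := by linarith
  have hkh : (0:ℝ) < k - 1/2 := by linarith
  have hk0' : (k:ℝ) ≠ 0 := hk0.ne'
  have hk1' : (k - 1:ℝ) ≠ 0 := hk1.ne'
  have hkh' : (k - 1/2:ℝ) ≠ 0 := hkh.ne'
  have h2k' : (2*k:ℝ) ≠ 0 := by positivity
  have h2km1 : (-1 + k*2:ℝ) ≠ 0 := ne_of_gt (by linarith)
  have hpi := Real.pi_pos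
  have h1 : 1 - (k - 1/2) / k < Real.log k - Real.log (k - 1/2) :=
    log_sub_log_gt _ _ hkh (by linarith)
  have h2 : 1 - (k - 1) / (k - 1/2) < Real.log (k - 1/2) - Real.log (k - 1) :=
    log_sub_log_gt _ _ hk1 (by linarith)
  have h3 : Real.log (2*k+1) - Real.log (2*k) < 1/(2*k) := by
    have hne : (2*k+1)/(2*k) ≠ 1 := by
      intro h'
      rw [div_eq_one_iff_eq h2k'] at h'
      linarith
    have hlt : Real.log ((2*k+1)/(2*k)) < (2*k+1)/(2*k) - 1 :=
      Real.log_lt_sub_one_of_pos (by positivity) hne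
    rw [Real.log_div (by linarith) h2k'] at hlt
    have he : (2*k+1)/(2*k) - 1 = 1/(2*k) := by field_simp; ring
    linarith [he ▸ hlt]
  have h2klog : Real.log (2*k) = Real.log 2 + Real.log k :=
    Real.log_mul two_ne_zero hk0'
  have hsum : 1/(2*k) + (1/2)/(k - 1/2) < Real.log k - Real.log (k-1) := by
    have e1 : 1 - (k - 1/2)/k = 1/(2*k) := by field_simp [h2km1]; ring
    have e2 : 1 - (k-1)/(k - 1/2) = (1/2)/(k - 1/2) := by
      rw [eq_div_iff hkh', sub_mul, div_mul_cancel₀ _ hkh']; ring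
    rw [e1] at h1; rw [e2] at h2; linarith
  have hkey : 2 + 1/(2*k) < 2*k*(Real.log k - Real.log (k-1)) := by
    have hmul : 2*k*(1/(2*k) + (1/2)/(k - 1/2)) < 2*k*(Real.log k - Real.log (k-1)) :=
      (mul_lt_mul_iff_right₀ (by linarith)).mpr hsum
    have e3 : 2*k*(1/(2*k) + (1/2)/(k - 1/2)) = 1 + k/(k - 1/2) := by
      rw [mul_add, mul_one_div_cancel h2k']
      congr 1
      ring
    have e4 : 2 + 1/(2*k) < 1 + k/(k - 1/2) := by
      have h6 : (1 + 1/(2*k)) * (k - 1/2) < k := by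
        have e7 : (1 + 1/(2*k)) * (k - 1/2) = (k - 1/2) + (k - 1/2)/(2*k) := by ring
        have h5 : (k - 1/2)/(2*k) < 1/2 := by
          rw [div_lt_iff₀ (by linarith : (0:ℝ) < 2*k)]; linarith
        rw [e7]; linarith
      have := (lt_div_iff₀ hkh).mpr h6
      linarith
    linarith [e3 ▸ hmul]
  rw [Real.log_div hk1' hk0',
      Real.log_div hk1' (by positivity : (2*Real.pi:ℝ) ≠ 0),
      Real.log_div (by positivity : (k*(k-1):ℝ) ≠ 0) (by linarith : (2*k+1:ℝ) ≠ 0),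
      Real.log_mul hk0' hk1',
      Real.log_mul two_ne_zero hpi.ne']
  nlinarith [h3, hkey, h2klog]
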